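/- Let n ≥ 1, k ≥ 1, and 20nk ≤ m < 2^{n/2} be integers. Every PostBPP list-solver with list size k that list-solves XOR-Missing-String(n,m) with error at most 2^{−5nk} has communication complexity at least m/4. -/

import Mathlib

/-- A deterministic communication protocol of complexity `c` on input space `I × I` with
outputs in `L`: the function `f` is computed by at most `2 ^ c` pairwise disjoint labeled
rectangles covering the input space. -/
def IsDetProtocol {I L : Type} (c : ℕ) (f : I → I → L) : Prop :=
  ∃ (N : ℕ) (Rx Ry : Fin N → Finset I) (lab : Fin N → L),
    N ≤ 2 ^ c ∧
    (∀ x y : I, ∃! t : Fin N, x ∈ Rx t ∧ y ∈ Ry t) ∧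
    (∀ x y : I, ∀ t : Fin N, x ∈ Rx t → y ∈ Ry t → f x y = lab t)

namespace XorMissingAux

open Finset

variable {n m k : ℕ}

/-- `v` is a heavy value for `A`: some coordinate takes value `v` with prob ≥ `2^{-2n}`. -/
def heavyP (A : Finset (Fin m → Fin n → Bool)) (v : Fin n → Bool) : Prop :=
  ∃ i, A.card ≤ 2^(2*n) * (A.filter (fun X => X i = v)).card

instance (A : Finset (Fin m → Fin n → Bool)) : DecidablePred (heavyP A) := by
  intro v; unfold heavyP; infer_instance

/-- In a large set `A` of tuples, heavy values cover more than 11/16 of all values. -/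
lemma heavy_lemma (h2m : 2*m ≤ 2^n) (hm1 : 1 ≤ m)
    (hnum : 2*(m/3) + 4*(n*k) + 3 ≤ m)
    (A : Finset (Fin m → Fin n → Bool))
    (hA : 2^(n*m) ≤ 2^(m/3 + 2*(n*k)) * A.card) :
    11 * 2^n < 16 * (Finset.univ.filter (heavyP A)).card := by
  by_contra hcon
  push_neg at hcon
  have hq : ∀ v : Fin n → Bool, (v ∈ Finset.univ.filter (heavyP A)) ↔ heavyP A v := by
    intro v; simp
  obtain ⟨V, hV⟩ : ∃ V, Finset.univ.filter (heavyP A) = V := ⟨_, rfl⟩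
  rw [hV] at hcon
  simp only [hV] at hq
  have hqiff : ∀ v, heavyP A v ↔ ∃ i, A.card ≤ 2^(2*n) * (A.filter (fun X => X i = v)).card :=
    fun v => Iff.rfl
  have hsplit : (A.filter (fun X => ∃ i, ¬ heavyP A (X i))).card
      + (A.filter (fun X => ¬ ∃ i, ¬ heavyP A (X i))).card = A.card :=
    Finset.card_filter_add_card_filter_not _
  have hbadsub : A.filter (fun X => ∃ i, ¬ heavyP A (X i)) ⊆
      Finset.univ.biUnion (fun i : Fin m => A.filter (fun X => ¬ heavyP A (X i))) := by
    intro X hX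
    simp only [mem_filter, mem_biUnion, mem_univ, true_and] at hX ⊢
    obtain ⟨hXA, i, hi⟩ := hX
    exact ⟨i, hXA, hi⟩
  have hfib : ∀ i : Fin m, (A.filter (fun X => ¬ heavyP A (X i))).card
      = ∑ v ∈ Finset.univ.filter (fun v => ¬ heavyP A v),
          ((A.filter (fun X => ¬ heavyP A (X i))).filter (fun X => X i = v)).card := by
    intro i
    apply Finset.card_eq_sum_card_fiberwise
    intro X hX
    simp only [mem_filter, mem_univ, true_and] at hX ⊢
    simpa using (Finset.mem_filter.mp hX).2
  have hcnt : ∀ i : Fin m, ∀ v ∈ Finset.univ.filter (fun v => ¬ heavyP A v),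
      2^(2*n) * ((A.filter (fun X => ¬ heavyP A (X i))).filter (fun X => X i = v)).card ≤ A.card := by
    intro i v hv
    simp only [mem_filter, mem_univ, true_and] at hv
    have h1 : ((A.filter (fun X => ¬ heavyP A (X i))).filter (fun X => X i = v)).card
        ≤ (A.filter (fun X => X i = v)).card := by
      apply Finset.card_le_card
      intro X hX
      simp only [mem_filter] at hX ⊢
      exact ⟨hX.1.1, hX.2⟩
    have h2 : ¬ (A.card ≤ 2^(2*n) * (A.filter (fun X => X i = v)).card) := by
      intro hcontra; exact hv ((hqiff v).mpr ⟨i, hcontra⟩)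
    push_neg at h2
    calc 2^(2*n) * ((A.filter (fun X => ¬ heavyP A (X i))).filter (fun X => X i = v)).card
        ≤ 2^(2*n) * (A.filter (fun X => X i = v)).card := Nat.mul_le_mul_left _ h1
      _ ≤ A.card := le_of_lt h2
  have hUcard : (Finset.univ.filter (fun v : Fin n → Bool => ¬ heavyP A v)).card ≤ 2^n := by
    calc (Finset.univ.filter (fun v : Fin n → Bool => ¬ heavyP A v)).card
        ≤ (Finset.univ : Finset (Fin n → Bool)).card := Finset.card_le_univ _
      _ = 2^n := by simp [Fintype.card_fun]
  have hbad : 2^(2*n) * (A.filter (fun X => ∃ i, ¬ heavyP A (X i))).card ≤ m * (2^n * A.card) := by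
    calc 2^(2*n) * (A.filter (fun X => ∃ i, ¬ heavyP A (X i))).card
        ≤ 2^(2*n) * ∑ i : Fin m, (A.filter (fun X => ¬ heavyP A (X i))).card :=
          Nat.mul_le_mul_left _ (le_trans (Finset.card_le_card hbadsub) Finset.card_biUnion_le)
      _ = ∑ i : Fin m, 2^(2*n) * (A.filter (fun X => ¬ heavyP A (X i))).card := by
          rw [Finset.mul_sum]
      _ ≤ ∑ _i : Fin m, 2^n * A.card := by
          apply Finset.sum_le_sum
          intro i _
          rw [hfib i, Finset.mul_sum]
          calc ∑ v ∈ Finset.univ.filter (fun v => ¬ heavyP A v),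
                2^(2*n) * ((A.filter (fun X => ¬ heavyP A (X i))).filter (fun X => X i = v)).card
              ≤ ∑ _v ∈ Finset.univ.filter (fun v => ¬ heavyP A v), A.card :=
                Finset.sum_le_sum (hcnt i)
            _ = (Finset.univ.filter (fun v : Fin n → Bool => ¬ heavyP A v)).card * A.card := by
                rw [Finset.sum_const, smul_eq_mul]
            _ ≤ 2^n * A.card := Nat.mul_le_mul_right _ hUcard
      _ = m * (2^n * A.card) := by simp [Finset.sum_const, Finset.card_univ]
  have hbad2 : 2 * (A.filter (fun X => ∃ i, ¬ heavyP A (X i))).card ≤ A.card := by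
    have hpos : 0 < m * 2^n := Nat.mul_pos hm1 (Nat.pow_pos (by norm_num))
    refine Nat.le_of_mul_le_mul_left ?_ hpos
    calc m * 2^n * (2 * (A.filter (fun X => ∃ i, ¬ heavyP A (X i))).card)
        = (2*m) * (2^n * (A.filter (fun X => ∃ i, ¬ heavyP A (X i))).card) := by ring
      _ ≤ 2^n * (2^n * (A.filter (fun X => ∃ i, ¬ heavyP A (X i))).card) :=
          Nat.mul_le_mul_right _ h2m
      _ = 2^(2*n) * (A.filter (fun X => ∃ i, ¬ heavyP A (X i))).card := by
          rw [← mul_assoc, ← pow_add, ← two_mul]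
      _ ≤ m * (2^n * A.card) := hbad
      _ = m * 2^n * A.card := by ring
  have hgood : (A.filter (fun X => ¬ ∃ i, ¬ heavyP A (X i))).card ≤ V.card ^ m := by
    calc (A.filter (fun X => ¬ ∃ i, ¬ heavyP A (X i))).card
        ≤ (Fintype.piFinset (fun _ : Fin m => V)).card := by
          apply Finset.card_le_card
          intro X hX
          simp only [mem_filter, Fintype.mem_piFinset] at hX ⊢
          push_neg at hX
          intro i
          exact (hq (X i)).mpr (hX.2 i)
      _ = V.card ^ m := by
          rw [Fintype.card_piFinset, Finset.prod_const, Finset.card_univ, Fintype.card_fin]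
  have hAcard : A.card ≤ 2 * V.card ^ m := by
    obtain ⟨b, hb⟩ : ∃ b, (A.filter (fun X => ∃ i, ¬ heavyP A (X i))).card = b := ⟨_, rfl⟩
    obtain ⟨g, hg⟩ : ∃ g, (A.filter (fun X => ¬ ∃ i, ¬ heavyP A (X i))).card = g := ⟨_, rfl⟩
    rw [hb, hg] at hsplit
    rw [hb] at hbad2
    rw [hg] at hgood
    clear * - hsplit hbad2 hgood
    omega
  have hstep2 : (2:ℕ)^(4*m) ≤ 2^(m/3 + 2*(n*k) + 1) * 11^m := by
    have hpos : 0 < 2^(n*m) := Nat.pow_pos (by norm_num)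
    refine Nat.le_of_mul_le_mul_left ?_ hpos
    calc 2^(n*m) * 2^(4*m) = 2^(n*m) * 16^m := by
          congr 1
          rw [show (16:ℕ) = 2^4 by norm_num, ← pow_mul]
      _ ≤ (2^(m/3 + 2*(n*k)) * A.card) * 16^m := Nat.mul_le_mul_right _ hA
      _ ≤ (2^(m/3 + 2*(n*k)) * (2 * V.card ^ m)) * 16^m := by
          apply Nat.mul_le_mul_right
          exact Nat.mul_le_mul_left _ hAcard
      _ = 2^(m/3 + 2*(n*k) + 1) * ((16 * V.card) ^ m) := by
          rw [mul_pow, pow_add]; ring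
      _ ≤ 2^(m/3 + 2*(n*k) + 1) * ((11 * 2^n) ^ m) := by
          apply Nat.mul_le_mul_left
          exact Nat.pow_le_pow_left hcon m
      _ = 2^(n*m) * (2^(m/3 + 2*(n*k) + 1) * 11^m) := by
          rw [mul_pow, ← pow_mul, mul_comm n m]; ring
  have hsq : (2:ℕ)^(8*m) ≤ 2^(2*(m/3 + 2*(n*k) + 1) + 7*m) := by
    have i1 : (2:ℕ)^(8*m) = 2^(4*m) * 2^(4*m) := by rw [← pow_add]; congr 1; ring
    have i2 : (2:ℕ)^(m/3 + 2*(n*k) + 1) * 11^m * (2^(m/3 + 2*(n*k) + 1) * 11^m)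
        = 2^(2*(m/3 + 2*(n*k) + 1)) * (121:ℕ)^m := by
      rw [two_mul, pow_add, show (121:ℕ) = 11*11 by norm_num, mul_pow]; ring
    have i4 : ((121:ℕ))^m ≤ (2^7)^m := Nat.pow_le_pow_left (by norm_num) m
    calc (2:ℕ)^(8*m) = 2^(4*m) * 2^(4*m) := i1
      _ ≤ (2^(m/3 + 2*(n*k) + 1) * 11^m) * (2^(m/3 + 2*(n*k) + 1) * 11^m) :=
          Nat.mul_le_mul hstep2 hstep2
      _ = 2^(2*(m/3 + 2*(n*k) + 1)) * (121:ℕ)^m := i2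
      _ ≤ 2^(2*(m/3 + 2*(n*k) + 1)) * (2^7)^m := Nat.mul_le_mul_left _ i4
      _ = 2^(2*(m/3 + 2*(n*k) + 1) + 7*m) := by rw [← pow_mul, ← pow_add, mul_comm 7 m]
  have hexp : 8*m ≤ 2*(m/3 + 2*(n*k) + 1) + 7*m :=
    (Nat.pow_le_pow_iff_right (by norm_num)).mp hsq
  obtain ⟨qq, hqq⟩ : ∃ qq, n*k = qq := ⟨n*k, rfl⟩
  rw [hqq] at hexp hnum
  clear * - hexp hnum
  omega

/-- Iterated conditioning: inside a large rectangle `A × B`, a positive fraction of the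
pairs realize every string of the list `L` as a pointwise XOR. -/
lemma build_lemma (h2m : 2*m ≤ 2^n) (hm1 : 1 ≤ m)
    (hnum : 2*(m/3) + 4*(n*k) + 3 ≤ m)
    (A B : Finset (Fin m → Fin n → Bool))
    (hA : 2^(n*m) ≤ 2^(m/3) * A.card) (hB : 2^(n*m) ≤ 2^(m/3) * B.card)
    (L : Fin k → Fin n → Bool) :
    ∃ A' B', A' ⊆ A ∧ B' ⊆ B ∧ A.card ≤ 2^(2*(n*k)) * A'.card ∧
      B.card ≤ 2^(2*(n*k)) * B'.card ∧
      ∀ X ∈ A', ∀ Y ∈ B', ∀ l : Fin k, ∃ i j : Fin m,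
        L l = fun u => Bool.xor (X i u) (Y j u) := by
  suffices H : ∀ t, t ≤ k → ∃ A' B', A' ⊆ A ∧ B' ⊆ B ∧ A.card ≤ 2^(2*(n*t)) * A'.card ∧
      B.card ≤ 2^(2*(n*t)) * B'.card ∧
      ∀ X ∈ A', ∀ Y ∈ B', ∀ l : Fin k, (l : ℕ) < t → ∃ i j : Fin m,
        L l = fun u => Bool.xor (X i u) (Y j u) by
    obtain ⟨A', B', h1, h2, h3, h4, h5⟩ := H k le_rfl
    exact ⟨A', B', h1, h2, h3, h4, fun X hX Y hY l => h5 X hX Y hY l l.isLt⟩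
  intro t
  induction t with
  | zero =>
    intro _
    refine ⟨A, B, subset_rfl, subset_rfl, ?_, ?_, ?_⟩
    · simp
    · simp
    · intro X _ Y _ l hl; omega
  | succ t ih =>
    intro ht
    obtain ⟨A', B', hA'sub, hB'sub, hAc, hBc, hprop⟩ := ih (by omega)
    have hlargeA : 2^(n*m) ≤ 2^(m/3 + 2*(n*k)) * A'.card := by
      calc 2^(n*m) ≤ 2^(m/3) * A.card := hA
        _ ≤ 2^(m/3) * (2^(2*(n*t)) * A'.card) := Nat.mul_le_mul_left _ hAc
        _ = 2^(m/3 + 2*(n*t)) * A'.card := by rw [pow_add]; ring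
        _ ≤ 2^(m/3 + 2*(n*k)) * A'.card := by
            apply Nat.mul_le_mul_right
            apply Nat.pow_le_pow_right (by norm_num)
            have : t ≤ k := by omega
            nlinarith
    have hlargeB : 2^(n*m) ≤ 2^(m/3 + 2*(n*k)) * B'.card := by
      calc 2^(n*m) ≤ 2^(m/3) * B.card := hB
        _ ≤ 2^(m/3) * (2^(2*(n*t)) * B'.card) := Nat.mul_le_mul_left _ hBc
        _ = 2^(m/3 + 2*(n*t)) * B'.card := by rw [pow_add]; ring
        _ ≤ 2^(m/3 + 2*(n*k)) * B'.card := by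
            apply Nat.mul_le_mul_right
            apply Nat.pow_le_pow_right (by norm_num)
            have : t ≤ k := by omega
            nlinarith
    have hVA := heavy_lemma h2m hm1 hnum A' hlargeA
    have hVB := heavy_lemma h2m hm1 hnum B' hlargeB
    have htk : t < k := by omega
    set s : Fin n → Bool := L ⟨t, htk⟩ with hs
    set g : (Fin n → Bool) → (Fin n → Bool) := fun w => fun u => Bool.xor (w u) (s u) with hg
    have hginv : Function.Involutive g := by
      intro w; funext u
      simp only [hg]
      cases w u <;> cases s u <;> rfl
    have hVim : ((Finset.univ.filter (heavyP B')).image g).card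
        = (Finset.univ.filter (heavyP B')).card :=
      Finset.card_image_of_injective _ hginv.injective
    have hunion : ((Finset.univ.filter (heavyP A')) ∪
        ((Finset.univ.filter (heavyP B')).image g)).card ≤ 2^n := by
      calc ((Finset.univ.filter (heavyP A')) ∪
          ((Finset.univ.filter (heavyP B')).image g)).card
          ≤ (Finset.univ : Finset (Fin n → Bool)).card := Finset.card_le_univ _
        _ = 2^n := by simp [Fintype.card_fun]
    have hinter := Finset.card_union_add_card_inter
      (Finset.univ.filter (heavyP A')) ((Finset.univ.filter (heavyP B')).image g)
    have hpos : 0 < ((Finset.univ.filter (heavyP A')) ∩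
        ((Finset.univ.filter (heavyP B')).image g)).card := by
      clear * - hVA hVB hVim hunion hinter
      omega
    obtain ⟨v, hv⟩ := Finset.card_pos.mp hpos
    rw [Finset.mem_inter] at hv
    obtain ⟨hvA, hvB⟩ := hv
    have hvA' : heavyP A' v := (Finset.mem_filter.mp hvA).2
    obtain ⟨w, hw, hgw⟩ := Finset.mem_image.mp hvB
    have hwB' : heavyP B' w := (Finset.mem_filter.mp hw).2
    obtain ⟨i, hi⟩ := hvA'
    obtain ⟨j, hj⟩ := hwB'
    refine ⟨A'.filter (fun X => X i = v), B'.filter (fun Y => Y j = w),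
      (Finset.filter_subset _ _).trans hA'sub, (Finset.filter_subset _ _).trans hB'sub,
      ?_, ?_, ?_⟩
    · calc A.card ≤ 2^(2*(n*t)) * A'.card := hAc
        _ ≤ 2^(2*(n*t)) * (2^(2*n) * (A'.filter (fun X => X i = v)).card) :=
            Nat.mul_le_mul_left _ hi
        _ = 2^(2*(n*(t+1))) * (A'.filter (fun X => X i = v)).card := by
            rw [show 2*(n*(t+1)) = 2*(n*t) + 2*n by ring, pow_add]; ring
    · calc B.card ≤ 2^(2*(n*t)) * B'.card := hBc
        _ ≤ 2^(2*(n*t)) * (2^(2*n) * (B'.filter (fun Y => Y j = w)).card) :=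
            Nat.mul_le_mul_left _ hj
        _ = 2^(2*(n*(t+1))) * (B'.filter (fun Y => Y j = w)).card := by
            rw [show 2*(n*(t+1)) = 2*(n*t) + 2*n by ring, pow_add]; ring
    · intro X hX Y hY l hl
      rcases Nat.lt_or_ge (l : ℕ) t with hlt | hge
      · exact hprop X (Finset.filter_subset _ A' hX) Y (Finset.filter_subset _ B' hY) l hlt
      · have hleq : l = ⟨t, htk⟩ := Fin.ext (Nat.le_antisymm (Nat.lt_succ_iff.mp hl) hge)
        refine ⟨i, j, ?_⟩
        have hXi : X i = v := (Finset.mem_filter.mp hX).2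
        have hYj : Y j = w := (Finset.mem_filter.mp hY).2
        have hvw : ∀ u, v u = Bool.xor (w u) (s u) := by
          intro u; rw [← hgw]
        rw [hleq, ← hs]
        funext u
        rw [hXi, hYj, hvw u]
        cases w u <;> cases s u <;> rfl

lemma partition_card {α : Type} [DecidableEq α] [Fintype α] {N : ℕ}
    (Rx Ry : Fin N → Finset α)
    (huniq : ∀ x y : α, ∃! t : Fin N, x ∈ Rx t ∧ y ∈ Ry t)
    (E : Finset (α × α)) :
    E.card = ∑ t : Fin N, (E.filter (fun p => p.1 ∈ Rx t ∧ p.2 ∈ Ry t)).card := by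
  classical
  have hfun : ∀ p : α × α, ∃ t, p.1 ∈ Rx t ∧ p.2 ∈ Ry t := fun p => (huniq p.1 p.2).exists
  choose f hf using hfun
  rw [Finset.card_eq_sum_card_fiberwise (f := f) (t := Finset.univ)
    (fun x _ => Finset.mem_univ _)]
  apply Finset.sum_congr rfl
  intro t _
  congr 1
  apply Finset.filter_congr
  intro p _
  constructor
  · rintro rfl; exact hf p
  · intro h; exact (huniq p.1 p.2).unique (hf p) h

end XorMissingAux

set_option maxHeartbeats 2000000 in
open Finset XorMissingAux in
/-- Any PostBPP list-solver with list size `k` (a family of `2^{k'}` deterministic protocols of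
complexity `c` outputting lists of `k` strings or `⊥`) that list-solves
`XOR-Missing-String(n,m)` with error at most `2^{-5nk}` has communication complexity
`k' + c ≥ m/4`. -/
theorem stmt7 (n m k : ℕ) (hn : 1 ≤ n) (hk : 1 ≤ k) (hm : 20 * n * k ≤ m)
    (hm2 : (m : ℝ) < (2 : ℝ) ^ ((n : ℝ) / 2))
    (k' c : ℕ)
    (Prot : Fin (2 ^ k') → (Fin m → Fin n → Bool) → (Fin m → Fin n → Bool) →
      Option (Fin k → Fin n → Bool))
    (hdet : ∀ r, IsDetProtocol c (Prot r))
    (hsolve : ∀ X Y : Fin m → Fin n → Bool,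
      (∃ r, Prot r X Y ≠ none) ∧
      (1 - ((2 : ℝ) ^ (5 * n * k))⁻¹) *
          ((Finset.univ.filter (fun r => Prot r X Y ≠ none)).card : ℝ) ≤
        ((Finset.univ.filter (fun r => ∃ L : Fin k → Fin n → Bool, Prot r X Y = some L ∧
            ∃ l : Fin k, ∀ i j : Fin m, L l ≠ fun u => Bool.xor (X i u) (Y j u))).card : ℝ)) :
    (m : ℝ) / 4 ≤ ((k' : ℝ) + (c : ℝ)) := by
  classical
  -- basic numeric facts
  have hm20 : 20 ≤ m := by
    calc 20 = 20 * 1 * 1 := by norm_num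
      _ ≤ 20 * n * k := Nat.mul_le_mul (Nat.mul_le_mul_left 20 hn) hk
      _ ≤ m := hm
  have hm1 : 1 ≤ m := by omega
  have hmm : m * m < 2^n := by
    have h1 : ((m : ℝ)) * m < ((2:ℝ)^n) := by
      have h0 : (0:ℝ) ≤ (m:ℝ) := Nat.cast_nonneg m
      calc (m:ℝ) * m < (2:ℝ)^((n:ℝ)/2) * (2:ℝ)^((n:ℝ)/2) :=
            mul_lt_mul'' hm2 hm2 h0 h0
        _ = (2:ℝ)^((n:ℝ)/2 + (n:ℝ)/2) := (Real.rpow_add (by norm_num) _ _).symm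
        _ = (2:ℝ)^((n:ℝ)) := by norm_num
        _ = (2:ℝ)^(n:ℕ) := Real.rpow_natCast 2 n
    exact_mod_cast h1
  have h2m : 2*m ≤ 2^n := by
    have h2 : 2*m ≤ m*m := by nlinarith
    exact le_trans h2 (le_of_lt hmm)
  have hnkm : 20*(n*k) ≤ m := by rw [← mul_assoc]; exact hm
  have hnk1 : 1 ≤ n*k := Nat.one_le_iff_ne_zero.mpr (by positivity)
  have hnum : 2*(m/3) + 4*(n*k) + 3 ≤ m := by clear * - hnkm hnk1; omega
  have hcardI : Fintype.card (Fin m → Fin n → Bool) = 2^(n*m) := by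
    rw [pow_mul]; simp [Fintype.card_fun]
  -- abbreviations
  have hε4pos : (0:ℝ) < (2:ℝ)^(4*(n*k)) := by positivity
  have hε4le1 : ((2:ℝ)^(4*(n*k)))⁻¹ ≤ 1 := by
    rw [inv_le_one_iff₀]
    right
    exact one_le_pow₀ (by norm_num)
  have hε4nonneg : (0:ℝ) ≤ ((2:ℝ)^(4*(n*k)))⁻¹ := by positivity
  have h1ε4 : (0:ℝ) ≤ 1 - ((2:ℝ)^(4*(n*k)))⁻¹ := by linarith
  have hCnonneg : (0:ℝ) ≤ ((2:ℝ)^(4*(n*k)))⁻¹ * ((2^(n*m) : ℕ) : ℝ)^2 / (2:ℝ)^(m/3) := by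
    positivity
  -- the per-protocol bound
  have claimR : ∀ r : Fin (2^k'),
      ((Finset.univ.filter (fun p : (Fin m → Fin n → Bool) × (Fin m → Fin n → Bool) =>
          ∃ L : Fin k → Fin n → Bool, Prot r p.1 p.2 = some L ∧
          ∃ l : Fin k, ∀ i j : Fin m, L l ≠ fun u => Bool.xor (p.1 i u) (p.2 j u))).card : ℝ)
      ≤ (1 - ((2:ℝ)^(4*(n*k)))⁻¹) *
          ((Finset.univ.filter (fun p : (Fin m → Fin n → Bool) × (Fin m → Fin n → Bool) =>
            Prot r p.1 p.2 ≠ none)).card : ℝ)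
        + (2^c : ℝ) * (((2:ℝ)^(4*(n*k)))⁻¹ * ((2^(n*m) : ℕ) : ℝ)^2 / (2:ℝ)^(m/3)) := by
    intro r
    obtain ⟨N, Rx, Ry, lab, hN, huniq, hval⟩ := hdet r
    have hGdecomp := partition_card Rx Ry huniq
      (Finset.univ.filter (fun p : (Fin m → Fin n → Bool) × (Fin m → Fin n → Bool) =>
          ∃ L : Fin k → Fin n → Bool, Prot r p.1 p.2 = some L ∧
          ∃ l : Fin k, ∀ i j : Fin m, L l ≠ fun u => Bool.xor (p.1 i u) (p.2 j u)))
    have hPdecomp := partition_card Rx Ry huniq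
      (Finset.univ.filter (fun p : (Fin m → Fin n → Bool) × (Fin m → Fin n → Bool) =>
          Prot r p.1 p.2 ≠ none))
    -- the per-rectangle bound
    have keyt : ∀ t : Fin N,
        (((Finset.univ.filter (fun p : (Fin m → Fin n → Bool) × (Fin m → Fin n → Bool) =>
          ∃ L : Fin k → Fin n → Bool, Prot r p.1 p.2 = some L ∧
          ∃ l : Fin k, ∀ i j : Fin m, L l ≠ fun u => Bool.xor (p.1 i u) (p.2 j u))).filter
            (fun p => p.1 ∈ Rx t ∧ p.2 ∈ Ry t)).card : ℝ)
        ≤ (1 - ((2:ℝ)^(4*(n*k)))⁻¹) *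
            (((Finset.univ.filter (fun p : (Fin m → Fin n → Bool) × (Fin m → Fin n → Bool) =>
              Prot r p.1 p.2 ≠ none)).filter (fun p => p.1 ∈ Rx t ∧ p.2 ∈ Ry t)).card : ℝ)
          + (((2:ℝ)^(4*(n*k)))⁻¹ * ((2^(n*m) : ℕ) : ℝ)^2 / (2:ℝ)^(m/3)) := by
      intro t
      cases hlabt : lab t with
      | none =>
        have hzero : ((Finset.univ.filter (fun p : (Fin m → Fin n → Bool) × (Fin m → Fin n → Bool) =>
            ∃ L : Fin k → Fin n → Bool, Prot r p.1 p.2 = some L ∧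
            ∃ l : Fin k, ∀ i j : Fin m, L l ≠ fun u => Bool.xor (p.1 i u) (p.2 j u))).filter
              (fun p => p.1 ∈ Rx t ∧ p.2 ∈ Ry t)) = ∅ := by
          rw [Finset.eq_empty_iff_forall_notMem]
          intro p hp
          rw [Finset.mem_filter, Finset.mem_filter] at hp
          obtain ⟨⟨_, L', hL', _⟩, hmem⟩ := hp
          rw [hval p.1 p.2 t hmem.1 hmem.2, hlabt] at hL'
          exact Option.noConfusion rfl (heq_of_eq hL')
        rw [hzero]
        simp only [Finset.card_empty, Nat.cast_zero]
        have : (0:ℝ) ≤ (1 - ((2:ℝ)^(4*(n*k)))⁻¹) *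
            (((Finset.univ.filter (fun p : (Fin m → Fin n → Bool) × (Fin m → Fin n → Bool) =>
              Prot r p.1 p.2 ≠ none)).filter (fun p => p.1 ∈ Rx t ∧ p.2 ∈ Ry t)).card : ℝ) :=
          mul_nonneg h1ε4 (Nat.cast_nonneg _)
        linarith
      | some L =>
        have hProtEq : ∀ p : (Fin m → Fin n → Bool) × (Fin m → Fin n → Bool),
            p.1 ∈ Rx t → p.2 ∈ Ry t → Prot r p.1 p.2 = some L := by
          intro p h1 h2
          rw [hval p.1 p.2 t h1 h2, hlabt]
        have hfibP : ((Finset.univ.filter (fun p : (Fin m → Fin n → Bool) × (Fin m → Fin n → Bool) =>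
            Prot r p.1 p.2 ≠ none)).filter (fun p => p.1 ∈ Rx t ∧ p.2 ∈ Ry t))
            = Rx t ×ˢ Ry t := by
          ext p
          simp only [Finset.mem_filter, Finset.mem_univ, true_and, Finset.mem_product]
          constructor
          · rintro ⟨_, h⟩; exact h
          · intro h
            refine ⟨?_, h⟩
            rw [hProtEq p h.1 h.2]
            simp
        have hfibG : ((Finset.univ.filter (fun p : (Fin m → Fin n → Bool) × (Fin m → Fin n → Bool) =>
            ∃ L' : Fin k → Fin n → Bool, Prot r p.1 p.2 = some L' ∧
            ∃ l : Fin k, ∀ i j : Fin m, L' l ≠ fun u => Bool.xor (p.1 i u) (p.2 j u))).filter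
              (fun p => p.1 ∈ Rx t ∧ p.2 ∈ Ry t))
            = (Rx t ×ˢ Ry t).filter (fun p => ¬ (∀ l : Fin k, ∃ i j : Fin m,
                L l = fun u => Bool.xor (p.1 i u) (p.2 j u))) := by
          ext p
          simp only [Finset.mem_filter, Finset.mem_univ, true_and, Finset.mem_product]
          constructor
          · rintro ⟨⟨L', hL', l, hsol⟩, hmem⟩
            refine ⟨hmem, ?_⟩
            rw [hProtEq p hmem.1 hmem.2] at hL'
            have hLL : L = L' := Option.some.inj hL'
            subst hLL
            intro hbad
            obtain ⟨i, j, he⟩ := hbad l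
            exact hsol i j he
          · rintro ⟨hmem, hgood⟩
            push_neg at hgood
            exact ⟨⟨L, hProtEq p hmem.1 hmem.2, hgood⟩, hmem⟩
        rw [hfibP, hfibG]
        -- split into good and bad inside the rectangle
        have hsplitE : ((Rx t ×ˢ Ry t).filter (fun p => (∀ l : Fin k, ∃ i j : Fin m,
              L l = fun u => Bool.xor (p.1 i u) (p.2 j u)))).card
            + ((Rx t ×ˢ Ry t).filter (fun p => ¬ (∀ l : Fin k, ∃ i j : Fin m,
              L l = fun u => Bool.xor (p.1 i u) (p.2 j u)))).card
            = (Rx t ×ˢ Ry t).card :=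
          Finset.card_filter_add_card_filter_not _
        have hEcard : (Rx t ×ˢ Ry t).card = (Rx t).card * (Ry t).card := Finset.card_product _ _
        by_cases hLA : 2^(n*m) ≤ 2^(m/3) * (Rx t).card
        · by_cases hLB : 2^(n*m) ≤ 2^(m/3) * (Ry t).card
          · -- large case
            obtain ⟨A', B', hsubA, hsubB, hcA, hcB, hprop⟩ :=
              build_lemma h2m hm1 hnum (Rx t) (Ry t) hLA hLB L
            have hsubBad : A' ×ˢ B' ⊆ (Rx t ×ˢ Ry t).filter (fun p => (∀ l : Fin k,
                ∃ i j : Fin m, L l = fun u => Bool.xor (p.1 i u) (p.2 j u))) := by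
              intro p hp
              rw [Finset.mem_product] at hp
              rw [Finset.mem_filter, Finset.mem_product]
              exact ⟨⟨hsubA hp.1, hsubB hp.2⟩, fun l => hprop p.1 hp.1 p.2 hp.2 l⟩
            have hbadlb : (Rx t).card * (Ry t).card ≤ 2^(4*(n*k)) *
                ((Rx t ×ˢ Ry t).filter (fun p => (∀ l : Fin k, ∃ i j : Fin m,
                  L l = fun u => Bool.xor (p.1 i u) (p.2 j u)))).card := by
              calc (Rx t).card * (Ry t).card
                  ≤ (2^(2*(n*k)) * A'.card) * (2^(2*(n*k)) * B'.card) := Nat.mul_le_mul hcA hcB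
                _ = 2^(4*(n*k)) * (A' ×ˢ B').card := by
                    rw [Finset.card_product, show 4*(n*k) = 2*(n*k) + 2*(n*k) by ring, pow_add]
                    ring
                _ ≤ 2^(4*(n*k)) * ((Rx t ×ˢ Ry t).filter (fun p => (∀ l : Fin k,
                    ∃ i j : Fin m, L l = fun u => Bool.xor (p.1 i u) (p.2 j u)))).card :=
                  Nat.mul_le_mul_left _ (Finset.card_le_card hsubBad)
            have hbadlbR : ((2:ℝ)^(4*(n*k)))⁻¹ * (((Rx t ×ˢ Ry t)).card : ℝ)
                ≤ (((Rx t ×ˢ Ry t).filter (fun p => (∀ l : Fin k, ∃ i j : Fin m,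
                  L l = fun u => Bool.xor (p.1 i u) (p.2 j u)))).card : ℝ) := by
              rw [inv_mul_le_iff₀ hε4pos]
              have := hbadlb
              rw [← hEcard] at this
              calc (((Rx t ×ˢ Ry t)).card : ℝ) ≤ ((2^(4*(n*k)) *
                  ((Rx t ×ˢ Ry t).filter (fun p => (∀ l : Fin k, ∃ i j : Fin m,
                    L l = fun u => Bool.xor (p.1 i u) (p.2 j u)))).card : ℕ) : ℝ) :=
                  Nat.cast_le.mpr this
                _ = (2:ℝ)^(4*(n*k)) * (((Rx t ×ˢ Ry t).filter (fun p => (∀ l : Fin k,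
                    ∃ i j : Fin m, L l = fun u => Bool.xor (p.1 i u) (p.2 j u)))).card : ℝ) := by
                  push_cast; ring
            have hsplitR : (((Rx t ×ˢ Ry t).filter (fun p => ¬ (∀ l : Fin k, ∃ i j : Fin m,
                L l = fun u => Bool.xor (p.1 i u) (p.2 j u)))).card : ℝ)
                = ((Rx t ×ˢ Ry t).card : ℝ)
                - (((Rx t ×ˢ Ry t).filter (fun p => (∀ l : Fin k, ∃ i j : Fin m,
                  L l = fun u => Bool.xor (p.1 i u) (p.2 j u)))).card : ℝ) := by
              have := hsplitE
              push_cast [← this]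
              ring
            rw [hsplitR]
            have hfinal : ((Rx t ×ˢ Ry t).card : ℝ)
                - (((Rx t ×ˢ Ry t).filter (fun p => (∀ l : Fin k, ∃ i j : Fin m,
                  L l = fun u => Bool.xor (p.1 i u) (p.2 j u)))).card : ℝ)
                ≤ (1 - ((2:ℝ)^(4*(n*k)))⁻¹) * ((Rx t ×ˢ Ry t).card : ℝ) := by
              have := hbadlbR
              nlinarith [Nat.cast_nonneg (α := ℝ) (Rx t ×ˢ Ry t).card]
            calc ((Rx t ×ˢ Ry t).card : ℝ)
                - (((Rx t ×ˢ Ry t).filter (fun p => (∀ l : Fin k, ∃ i j : Fin m,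
                  L l = fun u => Bool.xor (p.1 i u) (p.2 j u)))).card : ℝ)
                ≤ (1 - ((2:ℝ)^(4*(n*k)))⁻¹) * ((Rx t ×ˢ Ry t).card : ℝ) := hfinal
              _ ≤ (1 - ((2:ℝ)^(4*(n*k)))⁻¹) * ((Rx t ×ˢ Ry t).card : ℝ)
                  + (((2:ℝ)^(4*(n*k)))⁻¹ * ((2^(n*m) : ℕ) : ℝ)^2 / (2:ℝ)^(m/3)) := by
                  linarith [hCnonneg]
          · -- Ry small
            have hsmall : ((Rx t ×ˢ Ry t).card : ℝ)
                ≤ ((2^(n*m) : ℕ) : ℝ)^2 / (2:ℝ)^(m/3) := by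
              push_neg at hLB
              have h1 : ((Ry t).card : ℝ) ≤ ((2^(n*m):ℕ) : ℝ) / (2:ℝ)^(m/3) := by
                rw [le_div_iff₀ (by positivity)]
                have h2 : (2:ℕ)^(m/3) * (Ry t).card ≤ 2^(n*m) := le_of_lt hLB
                calc ((Ry t).card : ℝ) * (2:ℝ)^(m/3)
                    = (((2:ℕ)^(m/3) * (Ry t).card : ℕ) : ℝ) := by push_cast; ring
                  _ ≤ ((2^(n*m):ℕ) : ℝ) := by exact_mod_cast h2
              have h3 : ((Rx t).card : ℝ) ≤ ((2^(n*m):ℕ) : ℝ) := by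
                have := Finset.card_le_univ (Rx t)
                rw [hcardI] at this
                exact_mod_cast this
              rw [hEcard, Nat.cast_mul]
              calc ((Rx t).card : ℝ) * ((Ry t).card : ℝ)
                  ≤ ((2^(n*m):ℕ) : ℝ) * (((2^(n*m):ℕ) : ℝ) / (2:ℝ)^(m/3)) := by
                    apply mul_le_mul h3 h1 (Nat.cast_nonneg _) (Nat.cast_nonneg _)
                _ = ((2^(n*m):ℕ) : ℝ)^2 / (2:ℝ)^(m/3) := by ring
            calc (((Rx t ×ˢ Ry t).filter (fun p => ¬ (∀ l : Fin k, ∃ i j : Fin m,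
                L l = fun u => Bool.xor (p.1 i u) (p.2 j u)))).card : ℝ)
                ≤ ((Rx t ×ˢ Ry t).card : ℝ) := by
                  exact_mod_cast Finset.card_le_card (Finset.filter_subset _ _)
              _ = (1 - ((2:ℝ)^(4*(n*k)))⁻¹) * ((Rx t ×ˢ Ry t).card : ℝ)
                  + ((2:ℝ)^(4*(n*k)))⁻¹ * ((Rx t ×ˢ Ry t).card : ℝ) := by ring
              _ ≤ (1 - ((2:ℝ)^(4*(n*k)))⁻¹) * ((Rx t ×ˢ Ry t).card : ℝ)
                  + (((2:ℝ)^(4*(n*k)))⁻¹ * ((2^(n*m) : ℕ) : ℝ)^2 / (2:ℝ)^(m/3)) := by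
                  have := mul_le_mul_of_nonneg_left hsmall hε4nonneg
                  rw [mul_div_assoc]
                  linarith
        · -- Rx small
          have hsmall : ((Rx t ×ˢ Ry t).card : ℝ)
              ≤ ((2^(n*m) : ℕ) : ℝ)^2 / (2:ℝ)^(m/3) := by
            push_neg at hLA
            have h1 : ((Rx t).card : ℝ) ≤ ((2^(n*m):ℕ) : ℝ) / (2:ℝ)^(m/3) := by
              rw [le_div_iff₀ (by positivity)]
              have h2 : (2:ℕ)^(m/3) * (Rx t).card ≤ 2^(n*m) := le_of_lt hLA
              calc ((Rx t).card : ℝ) * (2:ℝ)^(m/3)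
                  = (((2:ℕ)^(m/3) * (Rx t).card : ℕ) : ℝ) := by push_cast; ring
                _ ≤ ((2^(n*m):ℕ) : ℝ) := by exact_mod_cast h2
            have h3 : ((Ry t).card : ℝ) ≤ ((2^(n*m):ℕ) : ℝ) := by
              have := Finset.card_le_univ (Ry t)
              rw [hcardI] at this
              exact_mod_cast this
            rw [hEcard, Nat.cast_mul]
            calc ((Rx t).card : ℝ) * ((Ry t).card : ℝ)
                ≤ (((2^(n*m):ℕ) : ℝ) / (2:ℝ)^(m/3)) * ((2^(n*m):ℕ) : ℝ) := by
                  apply mul_le_mul h1 h3 (Nat.cast_nonneg _) (by positivity)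
              _ = ((2^(n*m):ℕ) : ℝ)^2 / (2:ℝ)^(m/3) := by ring
          calc (((Rx t ×ˢ Ry t).filter (fun p => ¬ (∀ l : Fin k, ∃ i j : Fin m,
              L l = fun u => Bool.xor (p.1 i u) (p.2 j u)))).card : ℝ)
              ≤ ((Rx t ×ˢ Ry t).card : ℝ) := by
                exact_mod_cast Finset.card_le_card (Finset.filter_subset _ _)
            _ = (1 - ((2:ℝ)^(4*(n*k)))⁻¹) * ((Rx t ×ˢ Ry t).card : ℝ)
                + ((2:ℝ)^(4*(n*k)))⁻¹ * ((Rx t ×ˢ Ry t).card : ℝ) := by ring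
            _ ≤ (1 - ((2:ℝ)^(4*(n*k)))⁻¹) * ((Rx t ×ˢ Ry t).card : ℝ)
                + (((2:ℝ)^(4*(n*k)))⁻¹ * ((2^(n*m) : ℕ) : ℝ)^2 / (2:ℝ)^(m/3)) := by
                have := mul_le_mul_of_nonneg_left hsmall hε4nonneg
                rw [mul_div_assoc]
                linarith
    -- sum the per-rectangle bound
    calc ((Finset.univ.filter (fun p : (Fin m → Fin n → Bool) × (Fin m → Fin n → Bool) =>
          ∃ L : Fin k → Fin n → Bool, Prot r p.1 p.2 = some L ∧
          ∃ l : Fin k, ∀ i j : Fin m, L l ≠ fun u => Bool.xor (p.1 i u) (p.2 j u))).card : ℝ)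
        = ∑ t : Fin N, (((Finset.univ.filter
            (fun p : (Fin m → Fin n → Bool) × (Fin m → Fin n → Bool) =>
            ∃ L : Fin k → Fin n → Bool, Prot r p.1 p.2 = some L ∧
            ∃ l : Fin k, ∀ i j : Fin m, L l ≠ fun u => Bool.xor (p.1 i u) (p.2 j u))).filter
              (fun p => p.1 ∈ Rx t ∧ p.2 ∈ Ry t)).card : ℝ) := by
          rw [hGdecomp]; push_cast; ring
      _ ≤ ∑ t : Fin N, ((1 - ((2:ℝ)^(4*(n*k)))⁻¹) *
            (((Finset.univ.filter (fun p : (Fin m → Fin n → Bool) × (Fin m → Fin n → Bool) =>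
              Prot r p.1 p.2 ≠ none)).filter (fun p => p.1 ∈ Rx t ∧ p.2 ∈ Ry t)).card : ℝ)
          + (((2:ℝ)^(4*(n*k)))⁻¹ * ((2^(n*m) : ℕ) : ℝ)^2 / (2:ℝ)^(m/3))) :=
          Finset.sum_le_sum (fun t _ => keyt t)
      _ = (1 - ((2:ℝ)^(4*(n*k)))⁻¹) * (∑ t : Fin N,
            (((Finset.univ.filter (fun p : (Fin m → Fin n → Bool) × (Fin m → Fin n → Bool) =>
              Prot r p.1 p.2 ≠ none)).filter (fun p => p.1 ∈ Rx t ∧ p.2 ∈ Ry t)).card : ℝ))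
          + (N : ℝ) * (((2:ℝ)^(4*(n*k)))⁻¹ * ((2^(n*m) : ℕ) : ℝ)^2 / (2:ℝ)^(m/3)) := by
          rw [Finset.sum_add_distrib, Finset.sum_const, ← Finset.mul_sum, Finset.card_univ,
            Fintype.card_fin, nsmul_eq_mul]
      _ ≤ (1 - ((2:ℝ)^(4*(n*k)))⁻¹) *
            ((Finset.univ.filter (fun p : (Fin m → Fin n → Bool) × (Fin m → Fin n → Bool) =>
              Prot r p.1 p.2 ≠ none)).card : ℝ)
          + (2^c : ℝ) * (((2:ℝ)^(4*(n*k)))⁻¹ * ((2^(n*m) : ℕ) : ℝ)^2 / (2:ℝ)^(m/3)) := by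
          have he : ((Finset.univ.filter
              (fun p : (Fin m → Fin n → Bool) × (Fin m → Fin n → Bool) =>
              Prot r p.1 p.2 ≠ none)).card : ℝ) = ∑ t : Fin N,
              (((Finset.univ.filter (fun p : (Fin m → Fin n → Bool) × (Fin m → Fin n → Bool) =>
                Prot r p.1 p.2 ≠ none)).filter (fun p => p.1 ∈ Rx t ∧ p.2 ∈ Ry t)).card : ℝ) := by
            rw [hPdecomp]; push_cast; ring
          rw [← he]
          have hNle : (N : ℝ) ≤ (2^c : ℝ) := by exact_mod_cast hN
          have := mul_le_mul_of_nonneg_right hNle hCnonneg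
          linarith
  -- exchange sums over inputs and protocols
  have exchP : ∑ p : (Fin m → Fin n → Bool) × (Fin m → Fin n → Bool),
      (Finset.univ.filter (fun r : Fin (2^k') => Prot r p.1 p.2 ≠ none)).card
      = ∑ r : Fin (2^k'), (Finset.univ.filter
        (fun p : (Fin m → Fin n → Bool) × (Fin m → Fin n → Bool) =>
          Prot r p.1 p.2 ≠ none)).card := by
    simp_rw [Finset.card_filter]
    exact Finset.sum_comm
  have exchG : ∑ p : (Fin m → Fin n → Bool) × (Fin m → Fin n → Bool),
      (Finset.univ.filter (fun r : Fin (2^k') => ∃ L : Fin k → Fin n → Bool,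
        Prot r p.1 p.2 = some L ∧
        ∃ l : Fin k, ∀ i j : Fin m, L l ≠ fun u => Bool.xor (p.1 i u) (p.2 j u))).card
      = ∑ r : Fin (2^k'), (Finset.univ.filter
        (fun p : (Fin m → Fin n → Bool) × (Fin m → Fin n → Bool) =>
          ∃ L : Fin k → Fin n → Bool, Prot r p.1 p.2 = some L ∧
          ∃ l : Fin k, ∀ i j : Fin m, L l ≠ fun u => Bool.xor (p.1 i u) (p.2 j u))).card := by
    simp_rw [Finset.card_filter]
    exact Finset.sum_comm
  -- summed solving guarantee
  have hsum : (1 - ((2:ℝ)^(5*n*k))⁻¹) *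
      ((∑ r : Fin (2^k'), (Finset.univ.filter
        (fun p : (Fin m → Fin n → Bool) × (Fin m → Fin n → Bool) =>
          Prot r p.1 p.2 ≠ none)).card : ℕ) : ℝ)
      ≤ ((∑ r : Fin (2^k'), (Finset.univ.filter
        (fun p : (Fin m → Fin n → Bool) × (Fin m → Fin n → Bool) =>
          ∃ L : Fin k → Fin n → Bool, Prot r p.1 p.2 = some L ∧
          ∃ l : Fin k, ∀ i j : Fin m, L l ≠ fun u => Bool.xor (p.1 i u) (p.2 j u))).card : ℕ) : ℝ) := by
    rw [← exchP, ← exchG]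
    push_cast
    rw [Finset.mul_sum]
    apply Finset.sum_le_sum
    intro p _
    exact (hsolve p.1 p.2).2
  -- lower bound on the total acceptance count
  have hTlb : ((2^(n*m) : ℕ) : ℝ)^2 ≤ ((∑ r : Fin (2^k'), (Finset.univ.filter
      (fun p : (Fin m → Fin n → Bool) × (Fin m → Fin n → Bool) =>
        Prot r p.1 p.2 ≠ none)).card : ℕ) : ℝ) := by
    rw [← exchP]
    have hone : ∀ p : (Fin m → Fin n → Bool) × (Fin m → Fin n → Bool),
        1 ≤ (Finset.univ.filter (fun r : Fin (2^k') => Prot r p.1 p.2 ≠ none)).card := by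
      intro p
      apply Finset.card_pos.mpr
      obtain ⟨r, hr⟩ := (hsolve p.1 p.2).1
      exact ⟨r, Finset.mem_filter.mpr ⟨Finset.mem_univ r, hr⟩⟩
    have h2 : (2^(n*m))^2 ≤ ∑ p : (Fin m → Fin n → Bool) × (Fin m → Fin n → Bool),
        (Finset.univ.filter (fun r : Fin (2^k') => Prot r p.1 p.2 ≠ none)).card := by
      calc (2^(n*m))^2 = Fintype.card ((Fin m → Fin n → Bool) × (Fin m → Fin n → Bool)) := by
            rw [Fintype.card_prod, hcardI]; ring
        _ = ∑ _p : (Fin m → Fin n → Bool) × (Fin m → Fin n → Bool), 1 := by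
            rw [Finset.sum_const, Finset.card_univ, smul_eq_mul, mul_one]
        _ ≤ ∑ p : (Fin m → Fin n → Bool) × (Fin m → Fin n → Bool),
            (Finset.univ.filter (fun r : Fin (2^k') => Prot r p.1 p.2 ≠ none)).card :=
          Finset.sum_le_sum (fun p _ => hone p)
    calc ((2^(n*m) : ℕ) : ℝ)^2 = (((2^(n*m))^2 : ℕ) : ℝ) := by push_cast; ring
      _ ≤ _ := Nat.cast_le.mpr h2
  -- summed per-protocol bound
  have hsumR : ((∑ r : Fin (2^k'), (Finset.univ.filter
      (fun p : (Fin m → Fin n → Bool) × (Fin m → Fin n → Bool) =>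
        ∃ L : Fin k → Fin n → Bool, Prot r p.1 p.2 = some L ∧
        ∃ l : Fin k, ∀ i j : Fin m, L l ≠ fun u => Bool.xor (p.1 i u) (p.2 j u))).card : ℕ) : ℝ)
      ≤ (1 - ((2:ℝ)^(4*(n*k)))⁻¹) * ((∑ r : Fin (2^k'), (Finset.univ.filter
        (fun p : (Fin m → Fin n → Bool) × (Fin m → Fin n → Bool) =>
          Prot r p.1 p.2 ≠ none)).card : ℕ) : ℝ)
      + ((2:ℝ)^k') * ((2^c : ℝ) * (((2:ℝ)^(4*(n*k)))⁻¹ * ((2^(n*m) : ℕ) : ℝ)^2 / (2:ℝ)^(m/3))) := by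
    rw [Nat.cast_sum, Nat.cast_sum]
    calc ∑ r : Fin (2^k'), ((Finset.univ.filter
        (fun p : (Fin m → Fin n → Bool) × (Fin m → Fin n → Bool) =>
          ∃ L : Fin k → Fin n → Bool, Prot r p.1 p.2 = some L ∧
          ∃ l : Fin k, ∀ i j : Fin m, L l ≠ fun u => Bool.xor (p.1 i u) (p.2 j u))).card : ℝ)
        ≤ ∑ r : Fin (2^k'), ((1 - ((2:ℝ)^(4*(n*k)))⁻¹) * ((Finset.univ.filter
            (fun p : (Fin m → Fin n → Bool) × (Fin m → Fin n → Bool) =>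
              Prot r p.1 p.2 ≠ none)).card : ℝ)
          + (2^c : ℝ) * (((2:ℝ)^(4*(n*k)))⁻¹ * ((2^(n*m) : ℕ) : ℝ)^2 / (2:ℝ)^(m/3))) :=
          Finset.sum_le_sum (fun r _ => claimR r)
      _ = (1 - ((2:ℝ)^(4*(n*k)))⁻¹) * ∑ r : Fin (2^k'), ((Finset.univ.filter
            (fun p : (Fin m → Fin n → Bool) × (Fin m → Fin n → Bool) =>
              Prot r p.1 p.2 ≠ none)).card : ℝ)
          + ((2:ℝ)^k') * ((2^c : ℝ) * (((2:ℝ)^(4*(n*k)))⁻¹ * ((2^(n*m) : ℕ) : ℝ)^2 / (2:ℝ)^(m/3))) := by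
          rw [Finset.sum_add_distrib, Finset.sum_const, ← Finset.mul_sum, Finset.card_univ,
            Fintype.card_fin, nsmul_eq_mul]
          push_cast
          ring
  -- combine everything
  have hee : ((2:ℝ)^(5*n*k))⁻¹ ≤ ((2:ℝ)^(4*(n*k)))⁻¹ / 2 := by
    have hexp : 4*(n*k)+1 ≤ 5*n*k := by
      rw [mul_assoc]
      clear * - hnk1
      omega
    have h1 : (2:ℝ)^(4*(n*k)+1) ≤ (2:ℝ)^(5*n*k) := by
      apply pow_le_pow_right₀ (by norm_num) hexp
    have h2 : ((2:ℝ)^(5*n*k))⁻¹ ≤ ((2:ℝ)^(4*(n*k)+1))⁻¹ := by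
      apply inv_anti₀ (by positivity) h1
    calc ((2:ℝ)^(5*n*k))⁻¹ ≤ ((2:ℝ)^(4*(n*k)+1))⁻¹ := h2
      _ = ((2:ℝ)^(4*(n*k)))⁻¹ / 2 := by
        rw [pow_succ, mul_inv, div_eq_mul_inv]
  have hD2pos : (0:ℝ) < ((2^(n*m) : ℕ) : ℝ)^2 := by positivity
  have hTnonneg : (0:ℝ) ≤ ((∑ r : Fin (2^k'), (Finset.univ.filter
      (fun p : (Fin m → Fin n → Bool) × (Fin m → Fin n → Bool) =>
        Prot r p.1 p.2 ≠ none)).card : ℕ) : ℝ) := Nat.cast_nonneg _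
  -- main inequality
  have hmain : ((2:ℝ)^(4*(n*k)))⁻¹ / 2 * ((2^(n*m) : ℕ) : ℝ)^2
      ≤ ((2:ℝ)^k') * ((2^c : ℝ) * (((2:ℝ)^(4*(n*k)))⁻¹ * ((2^(n*m) : ℕ) : ℝ)^2 / (2:ℝ)^(m/3))) := by
    have step1 : (((2:ℝ)^(4*(n*k)))⁻¹ - ((2:ℝ)^(5*n*k))⁻¹) * ((∑ r : Fin (2^k'),
        (Finset.univ.filter (fun p : (Fin m → Fin n → Bool) × (Fin m → Fin n → Bool) =>
          Prot r p.1 p.2 ≠ none)).card : ℕ) : ℝ)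
        ≤ ((2:ℝ)^k') * ((2^c : ℝ) * (((2:ℝ)^(4*(n*k)))⁻¹ * ((2^(n*m) : ℕ) : ℝ)^2 / (2:ℝ)^(m/3))) := by
      nlinarith [hsum, hsumR]
    have step2 : ((2:ℝ)^(4*(n*k)))⁻¹ / 2 * ((2^(n*m) : ℕ) : ℝ)^2
        ≤ (((2:ℝ)^(4*(n*k)))⁻¹ - ((2:ℝ)^(5*n*k))⁻¹) * ((∑ r : Fin (2^k'),
        (Finset.univ.filter (fun p : (Fin m → Fin n → Bool) × (Fin m → Fin n → Bool) =>
          Prot r p.1 p.2 ≠ none)).card : ℕ) : ℝ) := by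
      have hge : ((2:ℝ)^(4*(n*k)))⁻¹ / 2 ≤ ((2:ℝ)^(4*(n*k)))⁻¹ - ((2:ℝ)^(5*n*k))⁻¹ := by
        linarith [hee]
      have h0 : (0:ℝ) ≤ ((2:ℝ)^(4*(n*k)))⁻¹ / 2 := by positivity
      calc ((2:ℝ)^(4*(n*k)))⁻¹ / 2 * ((2^(n*m) : ℕ) : ℝ)^2
          ≤ ((2:ℝ)^(4*(n*k)))⁻¹ / 2 * ((∑ r : Fin (2^k'),
            (Finset.univ.filter (fun p : (Fin m → Fin n → Bool) × (Fin m → Fin n → Bool) =>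
              Prot r p.1 p.2 ≠ none)).card : ℕ) : ℝ) :=
            mul_le_mul_of_nonneg_left hTlb h0
        _ ≤ _ := mul_le_mul_of_nonneg_right hge hTnonneg
    linarith
  -- cancel to get the exponent inequality
  have hPle : (2:ℝ)^(m/3) ≤ (2:ℝ)^(k'+c+1) := by
    have hPpos : (0:ℝ) < (2:ℝ)^(m/3) := by positivity
    have hcpos : (0:ℝ) < ((2:ℝ)^(4*(n*k)))⁻¹ * ((2^(n*m) : ℕ) : ℝ)^2 := by positivity
    have h2 : (((2:ℝ)^(4*(n*k)))⁻¹ * ((2^(n*m) : ℕ) : ℝ)^2) * ((2:ℝ)^(m/3))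
        ≤ (((2:ℝ)^(4*(n*k)))⁻¹ * ((2^(n*m) : ℕ) : ℝ)^2) * ((2:ℝ)^k' * (2:ℝ)^c * 2) := by
      calc (((2:ℝ)^(4*(n*k)))⁻¹ * ((2^(n*m) : ℕ) : ℝ)^2) * ((2:ℝ)^(m/3))
          = (((2:ℝ)^(4*(n*k)))⁻¹ / 2 * ((2^(n*m) : ℕ) : ℝ)^2) * (2 * (2:ℝ)^(m/3)) := by ring
        _ ≤ (((2:ℝ)^k') * ((2^c : ℝ) * (((2:ℝ)^(4*(n*k)))⁻¹ * ((2^(n*m) : ℕ) : ℝ)^2 / (2:ℝ)^(m/3))))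
            * (2 * (2:ℝ)^(m/3)) := by
            apply mul_le_mul_of_nonneg_right hmain (by positivity)
        _ = (((2:ℝ)^(4*(n*k)))⁻¹ * ((2^(n*m) : ℕ) : ℝ)^2) * ((2:ℝ)^k' * (2:ℝ)^c * 2) := by
            field_simp
    have h3 : (2:ℝ)^(m/3) ≤ (2:ℝ)^k' * (2:ℝ)^c * 2 := le_of_mul_le_mul_left h2 hcpos
    calc (2:ℝ)^(m/3) ≤ (2:ℝ)^k' * (2:ℝ)^c * 2 := h3
      _ = (2:ℝ)^(k'+c+1) := by rw [pow_add, pow_add, pow_one]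
  have hexpfin : m/3 ≤ k'+c+1 := by
    have hc : ((2^(m/3) : ℕ) : ℝ) ≤ ((2^(k'+c+1) : ℕ) : ℝ) := by push_cast; exact hPle
    exact (Nat.pow_le_pow_iff_right (by norm_num)).mp (Nat.cast_le.mp hc)
  have hfin : m ≤ 4*(k'+c) := by
    clear * - hexpfin hm20
    omega
  rw [div_le_iff₀ (by norm_num : (0:ℝ) < 4)]
  calc (m:ℝ) ≤ ((4*(k'+c) : ℕ) : ℝ) := Nat.cast_le.mpr hfin
    _ = ((k':ℝ) + (c:ℝ)) * 4 := by push_cast; ring
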